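/- Let ξ ∈ ℝ² with ξ ≠ 0, and let L be a line in ℝ² with induced arclength measure dS. If 0 < a < 1, 0 < b < 1, and a + b > 1, then ∫_L dS(η)/(|ξ − η|^a · |η|^b) ≤ C/|ξ|^{a+b−1} for a constant C depending only on a, b and independent of L and ξ. -/

import Mathlib

open MeasureTheory
open scoped ENNReal

section Helpers

open Set Real
open scoped RealInnerProductSpace

private lemma lie_meas_rpow (e : ℝ) : Measurable fun s : ℝ => s ^ e := by
  measurability

private lemma lie_lint_Ioc (b c : ℝ) (hb1 : b < 1) (hc : 0 < c) :
    ∫⁻ t in Ioc (0:ℝ) c, ENNReal.ofReal (t ^ (-b)) = ENNReal.ofReal (c ^ (1-b) / (1-b)) := by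
  have hint : IntegrableOn (fun t : ℝ => t ^ (-b)) (Ioc 0 c) := by
    have h := intervalIntegral.intervalIntegrable_rpow' (a := 0) (b := c) (r := -b) (by linarith)
    rwa [intervalIntegrable_iff, uIoc_of_le hc.le] at h
  rw [← ofReal_integral_eq_lintegral_ofReal hint]
  · congr 1
    have h := integral_rpow (a := 0) (b := c) (r := -b) (Or.inl (by linarith))
    rw [intervalIntegral.integral_of_le hc.le] at h
    rw [h, Real.zero_rpow (by linarith : -b + 1 ≠ 0)]
    ring_nf
  · filter_upwards [ae_restrict_mem measurableSet_Ioc] with t ht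
    exact Real.rpow_nonneg ht.1.le _

private lemma lie_lint_Ioi (g c : ℝ) (hg : 1 < g) (hc : 0 < c) :
    ∫⁻ t in Ioi c, ENNReal.ofReal (t ^ (-g)) = ENNReal.ofReal (c ^ (1-g) / (g-1)) := by
  have hint : IntegrableOn (fun t : ℝ => t ^ (-g)) (Ioi c) :=
    integrableOn_Ioi_rpow_of_lt (by linarith) hc
  rw [← ofReal_integral_eq_lintegral_ofReal hint]
  · congr 1
    rw [integral_Ioi_rpow_of_lt (by linarith) hc]
    rw [show -g + 1 = 1 - g by ring]
    rw [show (1:ℝ) - g = -(g-1) by ring, div_neg, neg_div, neg_neg]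
  · filter_upwards [ae_restrict_mem measurableSet_Ioi] with t ht
    exact Real.rpow_nonneg (hc.trans ht).le _

private lemma lie_lint_even (g : ℝ → ℝ≥0∞) (hg : Measurable g) :
    ∫⁻ t : ℝ, g |t| = 2 * ∫⁻ t in Ioi (0:ℝ), g t := by
  have hneg : Iio (0:ℝ) = Neg.neg ⁻¹' (Ioi (0:ℝ)) := by
    ext x; simp
  have h1 : ∫⁻ t in Iio (0:ℝ), g |t| = ∫⁻ t in Ioi (0:ℝ), g t := by
    have e1 : ∫⁻ t in Iio (0:ℝ), g |t| = ∫⁻ t in Iio (0:ℝ), g (-t) := by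
      apply setLIntegral_congr_fun measurableSet_Iio
      intro t ht
      dsimp only
      rw [abs_of_neg ht]
    rw [e1]
    have e2 : volume.restrict (Ioi (0:ℝ)) = Measure.map Neg.neg (volume.restrict (Iio (0:ℝ))) := by
      rw [hneg, ← Measure.restrict_map measurable_neg measurableSet_Ioi,
        Measure.map_neg_eq_self (volume : Measure ℝ)]
    rw [e2, lintegral_map hg measurable_neg]
  have h2 : ∫⁻ t in Ici (0:ℝ), g |t| = ∫⁻ t in Ioi (0:ℝ), g t := by
    rw [← restrict_Ioi_eq_restrict_Ici]
    apply setLIntegral_congr_fun measurableSet_Ioi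
    intro t ht
    dsimp only
    rw [abs_of_pos ht]
  have h3 := lintegral_add_compl (μ := volume) (fun t : ℝ => g |t|)
    (measurableSet_Iio (a := (0:ℝ)))
  rw [compl_Iio] at h3
  rw [← h3, h1, h2, two_mul]

private lemma lie_oneD (b g M c w : ℝ) (hb1 : b < 1) (hg : 1 < g) (hM : 0 ≤ M) (hc : 0 < c) :
    ∫⁻ t : ℝ, ENNReal.ofReal (if |t - w| ≤ c then M * |t - w| ^ (-b) else |t - w| ^ (-g))
      ≤ ENNReal.ofReal (2 * (M * (c ^ (1-b) / (1-b)) + c ^ (1-g) / (g-1))) := by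
  set F : ℝ → ℝ≥0∞ := fun s => ENNReal.ofReal (if s ≤ c then M * s ^ (-b) else s ^ (-g)) with hF
  have hmb : Measurable fun s : ℝ => s ^ (-b) := lie_meas_rpow _
  have hmg : Measurable fun s : ℝ => s ^ (-g) := lie_meas_rpow _
  have hFmeas : Measurable F := by
    apply ENNReal.measurable_ofReal.comp
    exact Measurable.ite (measurableSet_le measurable_id measurable_const) (hmb.const_mul M) hmg
  have step1 : ∫⁻ t : ℝ, ENNReal.ofReal
      (if |t - w| ≤ c then M * |t - w| ^ (-b) else |t - w| ^ (-g)) = ∫⁻ t : ℝ, F |t| := by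
    have := lintegral_add_right_eq_self (μ := volume) (fun t : ℝ => F |t|) (-w)
    simp only [← sub_eq_add_neg] at this
    rw [← this]
  rw [step1, lie_lint_even F hFmeas]
  have hsplit : Ioi (0:ℝ) = Ioc 0 c ∪ Ioi c := (Ioc_union_Ioi_eq_Ioi hc.le).symm
  rw [hsplit, lintegral_union measurableSet_Ioi (Ioc_disjoint_Ioi le_rfl)]
  have e1 : ∫⁻ t in Ioc (0:ℝ) c, F t = ENNReal.ofReal (M * (c ^ (1-b) / (1-b))) := by
    have : ∫⁻ t in Ioc (0:ℝ) c, F t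
        = ∫⁻ t in Ioc (0:ℝ) c, ENNReal.ofReal M * ENNReal.ofReal (t ^ (-b)) := by
      apply setLIntegral_congr_fun measurableSet_Ioc
      intro t ht
      dsimp only
      rw [hF]
      simp only [if_pos ht.2]
      rw [ENNReal.ofReal_mul hM]
    rw [this, lintegral_const_mul _ hmb.ennreal_ofReal,
      lie_lint_Ioc b c hb1 hc, ← ENNReal.ofReal_mul hM]
  have e2 : ∫⁻ t in Ioi c, F t = ENNReal.ofReal (c ^ (1-g) / (g-1)) := by
    have : ∫⁻ t in Ioi c, F t = ∫⁻ t in Ioi c, ENNReal.ofReal (t ^ (-g)) := by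
      apply setLIntegral_congr_fun measurableSet_Ioi
      intro t ht
      dsimp only
      rw [hF]
      simp only [if_neg (not_le.mpr (Set.mem_Ioi.mp ht))]
    rw [this, lie_lint_Ioi g c hg hc]
  rw [e1, e2, ← ENNReal.ofReal_add
      (mul_nonneg hM (div_nonneg (Real.rpow_nonneg hc.le _) (by linarith)))
      (div_nonneg (Real.rpow_nonneg hc.le _) (by linarith)),
    ← ENNReal.ofReal_ofNat 2, ← ENNReal.ofReal_mul (by norm_num)]

private lemma lie_ptwise (a b R x y s₁ s₂ : ℝ) (ha0 : 0 < a) (hb0 : 0 < b) (hR : 0 < R)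
    (hs1 : 0 < s₁) (hs2 : 0 < s₂) (h1 : s₁ ≤ x) (h2 : s₂ ≤ y) (hxy : R ≤ x + y) :
    1/(x^a * y^b) ≤ (if s₂ ≤ R/2 then (2/R)^a * s₂^(-b) else s₂^(-(a+b)))
                 + (if s₁ ≤ R/2 then (2/R)^b * s₁^(-a) else s₁^(-(a+b))) := by
  have hx : 0 < x := hs1.trans_le h1
  have hy : 0 < y := hs2.trans_le h2
  have h2R : (0:ℝ) ≤ 2/R := by positivity
  have hhalf : 0 < R/2 := by positivity
  have main : ∀ p q u v s : ℝ, 0 < p → 0 < q → 0 < s → s ≤ v → v ≤ u → R/2 ≤ u →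
      1/(u^p * v^q) ≤ (if s ≤ R/2 then (2/R)^p * s^(-q) else s^(-(p+q))) := by
    intro p q u v s hp hq hs hsv hvu hu
    have hv : 0 < v := hs.trans_le hsv
    have hu0 : 0 < u := hv.trans_le hvu
    split_ifs with hcase
    · have e : (2/R)^p * s^(-q) = 1/((R/2)^p * s^q) := by
        rw [Real.rpow_neg hs.le, show (2/R) = (R/2)⁻¹ by rw [inv_div],
          Real.inv_rpow hhalf.le, one_div, mul_inv]
      rw [e]
      apply one_div_le_one_div_of_le (by positivity)
      exact mul_le_mul (Real.rpow_le_rpow hhalf.le hu hp.le)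
        (Real.rpow_le_rpow hs.le hsv hq.le) (by positivity) (by positivity)
    · have e : s^(-(p+q)) = 1/(s^p * s^q) := by
        rw [Real.rpow_neg hs.le, Real.rpow_add hs, one_div]
      rw [e]
      apply one_div_le_one_div_of_le (by positivity)
      exact mul_le_mul (Real.rpow_le_rpow hs.le (hsv.trans hvu) hp.le)
        (Real.rpow_le_rpow hs.le hsv hq.le) (by positivity) (by positivity)
  have nonneg : ∀ p q s : ℝ, 0 < s → 0 ≤ (if s ≤ R/2 then (2/R)^p * s^(-q) else s^(-(p+q))) := by
    intro p q s hs
    split_ifs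
    · exact mul_nonneg (Real.rpow_nonneg h2R _) (Real.rpow_nonneg hs.le _)
    · exact Real.rpow_nonneg hs.le _
  rcases le_total y x with hc | hc
  · have hu : R/2 ≤ x := by linarith
    calc 1/(x^a * y^b) ≤ _ := main a b x y s₂ ha0 hb0 hs2 h2 hc hu
    _ ≤ _ := le_add_of_nonneg_right (nonneg b a s₁ hs1)
    _ = _ := by rw [add_comm b a]
  · have hu : R/2 ≤ y := by linarith
    have hxya := main b a y x s₁ hb0 ha0 hs1 h1 hc hu
    rw [mul_comm (x^a)]
    calc 1/(y^b * x^a) ≤ _ := hxya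
    _ ≤ _ := le_add_of_nonneg_left (nonneg a b s₂ hs2)
    _ = _ := by rw [add_comm b a]

private lemma lie_final_arith (a b R : ℝ) (ha1 : a < 1) (hb1 : b < 1)
    (hab : 1 < a + b) (hR : 0 < R) :
    2 * ((2/R)^a * ((R/2) ^ (1-b) / (1-b)) + (R/2) ^ (1-(a+b)) / ((a+b)-1))
      + 2 * ((2/R)^b * ((R/2) ^ (1-a) / (1-a)) + (R/2) ^ (1-(a+b)) / ((a+b)-1))
      ≤ (2 ^ (a+b) * (1/(1-a) + 1/(1-b) + 2/(a+b-1))) / R ^ (a+b-1) := by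
  have hz : 0 < R/2 := by positivity
  set A : ℝ := (R/2) ^ (1-(a+b)) with hA
  have e1 : (2/R)^a * (R/2) ^ (1-b) = A := by
    rw [hA, show (2/R) = (R/2)⁻¹ by rw [inv_div], Real.inv_rpow hz.le, ← Real.rpow_neg hz.le,
      ← Real.rpow_add hz]
    congr 1; ring
  have e2 : (2/R)^b * (R/2) ^ (1-a) = A := by
    rw [hA, show (2/R) = (R/2)⁻¹ by rw [inv_div], Real.inv_rpow hz.le, ← Real.rpow_neg hz.le,
      ← Real.rpow_add hz]
    congr 1; ring
  have eA : A = 2 ^ (a+b-1) / R ^ (a+b-1) := by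
    rw [hA, show 1-(a+b) = -(a+b-1) by ring, Real.rpow_neg hz.le,
      Real.div_rpow hR.le (by norm_num : (0:ℝ) ≤ 2), inv_div]
  have e3 : (2:ℝ) ^ (a+b) = 2 * 2 ^ (a+b-1) := by
    have h := Real.rpow_add (show (0:ℝ) < 2 by norm_num) 1 (a+b-1)
    rw [Real.rpow_one, show 1+(a+b-1) = a+b by ring] at h
    exact h
  have hRd : (0:ℝ) < R ^ (a+b-1) := Real.rpow_pos_of_pos hR _
  have hB : (0:ℝ) < 2 ^ (a+b-1) := Real.rpow_pos_of_pos (by norm_num) _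
  rw [mul_div_assoc' ((2/R)^a), e1, mul_div_assoc' ((2/R)^b), e2, eA, e3]
  apply le_of_eq
  have h1a : (1:ℝ) - a ≠ 0 := by linarith
  have h1b : (1:ℝ) - b ≠ 0 := by linarith
  have hab1 : a + b - 1 ≠ 0 := by linarith
  have hab1' : (a+b) - 1 ≠ 0 := by linarith
  field_simp
  ring

private lemma lie_param (L : AffineSubspace ℝ (EuclideanSpace ℝ (Fin 2)))
    (hL : Module.finrank ℝ L.direction = 1) :
    ∃ p u : EuclideanSpace ℝ (Fin 2), ‖u‖ = 1 ∧
      (L : Set (EuclideanSpace ℝ (Fin 2))) = Set.range (fun t : ℝ => t • u + p) := by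
  have hdir : L.direction ≠ ⊥ := by
    intro h
    rw [h] at hL
    simp at hL
  have hLne : (L : Set (EuclideanSpace ℝ (Fin 2))).Nonempty := by
    by_contra h
    rw [Set.not_nonempty_iff_eq_empty] at h
    have : L = ⊥ := by
      ext z; simp [← AffineSubspace.mem_coe, h]
    rw [this, AffineSubspace.direction_bot] at hdir
    exact hdir rfl
  obtain ⟨p, hp⟩ := hLne
  obtain ⟨v, hv, hv0⟩ := Submodule.exists_mem_ne_zero_of_ne_bot hdir
  refine ⟨p, ‖v‖⁻¹ • v, norm_smul_inv_norm hv0, ?_⟩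
  set u := ‖v‖⁻¹ • v with hu
  have hu0 : u ≠ 0 := by
    simp [hu, smul_ne_zero_iff, hv0, norm_ne_zero_iff.mpr hv0, inv_ne_zero]
  have humem : u ∈ L.direction := L.direction.smul_mem _ hv
  have hspan : (ℝ ∙ u) = L.direction := by
    apply Submodule.eq_of_le_of_finrank_le
    · rwa [Submodule.span_singleton_le_iff_mem]
    · rw [hL, finrank_span_singleton hu0]
  ext η
  constructor
  · intro hη
    have hmem : η -ᵥ p ∈ L.direction := AffineSubspace.vsub_mem_direction hη hp
    rw [← hspan, Submodule.mem_span_singleton] at hmem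
    obtain ⟨t, ht⟩ := hmem
    exact ⟨t, by simp only [ht]; simp [vsub_eq_sub]⟩
  · rintro ⟨t, rfl⟩
    have : t • u ∈ L.direction := L.direction.smul_mem _ humem
    simpa using AffineSubspace.vadd_mem_of_mem_direction this hp

end Helpers

/-- For any line L in ℝ² and ξ ≠ 0, with 0 < a < 1, 0 < b < 1,
a + b > 1, one has ∫_L |ξ − η|^{-a}|η|^{-b} dS(η) ≤ C |ξ|^{-(a+b-1)} with
C = C(a,b) independent of L and ξ. -/
theorem line_integral_estimate
    (a b : ℝ) (ha0 : 0 < a) (ha1 : a < 1) (hb0 : 0 < b) (hb1 : b < 1)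
    (hab : 1 < a + b) :
    ∃ C : ℝ, 0 < C ∧
      ∀ (ξ : EuclideanSpace ℝ (Fin 2)), ξ ≠ 0 →
        ∀ (L : AffineSubspace ℝ (EuclideanSpace ℝ (Fin 2))),
          Module.finrank ℝ L.direction = 1 →
          ∫⁻ η in (L : Set (EuclideanSpace ℝ (Fin 2))),
              ENNReal.ofReal (1 / (‖ξ - η‖ ^ a * ‖η‖ ^ b)) ∂(μH[1])
            ≤ ENNReal.ofReal (C / ‖ξ‖ ^ (a + b - 1)) := by
  classical
  refine ⟨2 ^ (a+b) * (1/(1-a) + 1/(1-b) + 2/(a+b-1)), ?_, ?_⟩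
  · have h1 : (0:ℝ) < 2 ^ (a+b) := Real.rpow_pos_of_pos (by norm_num) _
    have h2 : (0:ℝ) < 1/(1-a) := by
      apply div_pos one_pos; linarith
    have h3 : (0:ℝ) < 1/(1-b) := by
      apply div_pos one_pos; linarith
    have h4 : (0:ℝ) < 2/(a+b-1) := by
      apply div_pos two_pos; linarith
    positivity
  intro ξ hξ L hL
  set R : ℝ := ‖ξ‖ with hRdef
  have hR : 0 < R := norm_pos_iff.mpr hξ
  obtain ⟨p, u, hu, hrange⟩ := lie_param L hL
  set f : ℝ → EuclideanSpace ℝ (Fin 2) := fun t => t • u + p with hfdef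
  have hiso : Isometry f := by
    apply Isometry.of_dist_eq
    intro s t
    rw [dist_eq_norm, dist_eq_norm]
    have : f s - f t = (s - t) • u := by
      rw [hfdef]; simp only [sub_smul]; abel
    rw [this, norm_smul, hu, Real.norm_eq_abs, mul_one]
  have hmap : Measure.map f volume
      = (μH[1] : Measure (EuclideanSpace ℝ (Fin 2))).restrict (Set.range f) := by
    rw [← MeasureTheory.hausdorffMeasure_real]
    exact hiso.map_hausdorffMeasure (Or.inl zero_le_one)
  have hgmeas : Measurable fun η : EuclideanSpace ℝ (Fin 2) =>
      ENNReal.ofReal (1 / (‖ξ - η‖ ^ a * ‖η‖ ^ b)) := by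
    apply Measurable.ennreal_ofReal
    apply Measurable.div measurable_const
    exact ((lie_meas_rpow a).comp (measurable_const.sub measurable_id).norm).mul
      ((lie_meas_rpow b).comp measurable_norm)
  -- inner product notation
  set w₁ : ℝ := -(inner ℝ p u : ℝ) with hw1
  set w₂ : ℝ := (inner ℝ (ξ - p) u : ℝ) with hw2
  have huu : (inner ℝ u u : ℝ) = 1 := by
    rw [real_inner_self_eq_norm_mul_norm, hu]; norm_num
  have key1 : ∀ t : ℝ, |t - w₁| ≤ ‖f t‖ := by
    intro t
    have h := abs_real_inner_le_norm (f t) u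
    rw [hfdef] at h
    simp only at h
    rw [inner_add_left, real_inner_smul_left, huu, hu, mul_one, mul_one] at h
    calc |t - w₁| = |t + (inner ℝ p u : ℝ)| := by rw [hw1, sub_neg_eq_add]
    _ ≤ _ := h
  have key2 : ∀ t : ℝ, |t - w₂| ≤ ‖ξ - f t‖ := by
    intro t
    have h := abs_real_inner_le_norm (ξ - f t) u
    rw [hfdef] at h
    simp only at h
    rw [inner_sub_left, inner_add_left, real_inner_smul_left, huu, hu, mul_one, mul_one] at h
    calc |t - w₂| = |(inner ℝ ξ u : ℝ) - (t + (inner ℝ p u : ℝ))| := by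
          rw [hw2, inner_sub_left, abs_sub_comm]; ring_nf
    _ ≤ _ := h
  -- the two 1D dominating functions
  set G₁ : ℝ → ℝ := fun t =>
    if |t - w₁| ≤ R/2 then (2/R)^a * |t - w₁| ^ (-b) else |t - w₁| ^ (-(a+b)) with hG1
  set G₂ : ℝ → ℝ := fun t =>
    if |t - w₂| ≤ R/2 then (2/R)^b * |t - w₂| ^ (-a) else |t - w₂| ^ (-(a+b)) with hG2
  have hmb : Measurable fun s : ℝ => s ^ (-b) := lie_meas_rpow _
  have hma : Measurable fun s : ℝ => s ^ (-a) := lie_meas_rpow _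
  have hmab : Measurable fun s : ℝ => s ^ (-(a+b)) := lie_meas_rpow _
  have habs1 : Measurable fun t : ℝ => |t - w₁| := (measurable_id.sub measurable_const).abs
  have habs2 : Measurable fun t : ℝ => |t - w₂| := (measurable_id.sub measurable_const).abs
  have hG1m : Measurable fun t => ENNReal.ofReal (G₁ t) := by
    apply Measurable.ennreal_ofReal
    rw [hG1]
    exact Measurable.ite (measurableSet_le habs1 measurable_const)
      ((hmb.comp habs1).const_mul _) (hmab.comp habs1)
  have hG2m : Measurable fun t => ENNReal.ofReal (G₂ t) := by
    apply Measurable.ennreal_ofReal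
    rw [hG2]
    exact Measurable.ite (measurableSet_le habs2 measurable_const)
      ((hma.comp habs2).const_mul _) (hmab.comp habs2)
  calc ∫⁻ η in (L : Set (EuclideanSpace ℝ (Fin 2))),
        ENNReal.ofReal (1 / (‖ξ - η‖ ^ a * ‖η‖ ^ b)) ∂(μH[1])
      = ∫⁻ t : ℝ, ENNReal.ofReal (1 / (‖ξ - f t‖ ^ a * ‖f t‖ ^ b)) := by
        rw [hrange, ← hmap, lintegral_map hgmeas hiso.continuous.measurable]
    _ ≤ ∫⁻ t : ℝ, (ENNReal.ofReal (G₁ t) + ENNReal.ofReal (G₂ t)) := by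
        apply lintegral_mono_ae
        have h1 : ∀ᵐ t : ℝ, t ≠ w₁ := by
          refine ae_iff.mpr ?_
          simp [not_not]
        have h2 : ∀ᵐ t : ℝ, t ≠ w₂ := by
          refine ae_iff.mpr ?_
          simp [not_not]
        filter_upwards [h1, h2] with t ht1 ht2
        have hs1 : 0 < |t - w₂| := abs_pos.mpr (sub_ne_zero.mpr ht2)
        have hs2 : 0 < |t - w₁| := abs_pos.mpr (sub_ne_zero.mpr ht1)
        have htri : R ≤ ‖ξ - f t‖ + ‖f t‖ := by
          have := norm_add_le (ξ - f t) (f t)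
          simpa using this
        have hkey := lie_ptwise a b R (‖ξ - f t‖) (‖f t‖) (|t - w₂|) (|t - w₁|)
          ha0 hb0 hR hs1 hs2 (key2 t) (key1 t) htri
        refine le_trans (ENNReal.ofReal_le_ofReal hkey) ?_
        exact ENNReal.ofReal_add_le
    _ = (∫⁻ t : ℝ, ENNReal.ofReal (G₁ t)) + ∫⁻ t : ℝ, ENNReal.ofReal (G₂ t) :=
        lintegral_add_left hG1m _
    _ ≤ ENNReal.ofReal (2 * ((2/R)^a * ((R/2) ^ (1-b) / (1-b)) + (R/2) ^ (1-(a+b)) / ((a+b)-1)))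
        + ENNReal.ofReal (2 * ((2/R)^b * ((R/2) ^ (1-a) / (1-a)) + (R/2) ^ (1-(a+b)) / ((a+b)-1)))
        := by
        apply add_le_add
        · exact lie_oneD b (a+b) ((2/R)^a) (R/2) w₁ hb1 hab
            (Real.rpow_nonneg (by positivity) _) (by positivity)
        · exact lie_oneD a (a+b) ((2/R)^b) (R/2) w₂ ha1 hab
            (Real.rpow_nonneg (by positivity) _) (by positivity)
    _ ≤ ENNReal.ofReal ((2 ^ (a+b) * (1/(1-a) + 1/(1-b) + 2/(a+b-1))) / R ^ (a+b-1)) := by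
        have hqa : (0:ℝ) ≤ (2/R)^a := Real.rpow_nonneg (by positivity) _
        have hqb : (0:ℝ) ≤ (2/R)^b := Real.rpow_nonneg (by positivity) _
        have hq1 : (0:ℝ) ≤ (R/2)^(1-b) := Real.rpow_nonneg (by positivity) _
        have hq2 : (0:ℝ) ≤ (R/2)^(1-a) := Real.rpow_nonneg (by positivity) _
        have hq3 : (0:ℝ) ≤ (R/2)^(1-(a+b)) := Real.rpow_nonneg (by positivity) _
        have hT1 : (0:ℝ) ≤ 2 * ((2/R)^a * ((R/2) ^ (1-b) / (1-b)) + (R/2) ^ (1-(a+b)) / ((a+b)-1)) :=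
          mul_nonneg (by norm_num) (add_nonneg
            (mul_nonneg hqa (div_nonneg hq1 (by linarith)))
            (div_nonneg hq3 (by linarith)))
        have hT2 : (0:ℝ) ≤ 2 * ((2/R)^b * ((R/2) ^ (1-a) / (1-a)) + (R/2) ^ (1-(a+b)) / ((a+b)-1)) :=
          mul_nonneg (by norm_num) (add_nonneg
            (mul_nonneg hqb (div_nonneg hq2 (by linarith)))
            (div_nonneg hq3 (by linarith)))
        rw [← ENNReal.ofReal_add hT1 hT2]
        exact ENNReal.ofReal_le_ofReal (lie_final_arith a b R ha1 hb1 hab hR)
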